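/- There exists a computably enumerable equivalence relation on ℕ which is not the connectedness relation of any computable graph. Concretely, for a c.e. non-computable set A ⊆ ℕ, the relation a E b ⟺ (a = b) ∨ (∃n, {a,b} = {2n, 2n+1} ∧ n ∈ A) is a ceer that is not computably graphable. -/

import Mathlib

/-- A predicate on `ℕ` is computably enumerable if it is the domain of a partial computable
function. -/
def CEPred (S : ℕ → Prop) : Prop :=
  ∃ p : ℕ →. Unit, Partrec p ∧ ∀ n, (p n).Dom ↔ S n

/-- There is a ceer which is not computably graphable: for a c.e. non-computable `A ⊆ ℕ`,
the relation `a E b ⟺ a = b ∨ ∃ n ∈ A, {a,b} = {2n, 2n+1}` is a computably enumerable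
equivalence relation which is not the connectedness relation of any computable graph. -/
theorem stmt14 (A : ℕ → Prop) (hce : CEPred A) (hnc : ¬ ComputablePred A)
    (E : ℕ → ℕ → Prop)
    (hEdef : ∀ a b : ℕ, E a b ↔ (a = b ∨ ∃ n : ℕ, A n ∧
      ((a = 2 * n ∧ b = 2 * n + 1) ∨ (a = 2 * n + 1 ∧ b = 2 * n)))) :
    Equivalence E ∧
    CEPred (fun n => E (Nat.unpair n).1 (Nat.unpair n).2) ∧
    ¬ ∃ G : ℕ → ℕ → Prop,
        ComputablePred (fun n => G (Nat.unpair n).1 (Nat.unpair n).2) ∧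
        Symmetric G ∧ Irreflexive G ∧
        (∀ x y, E x y ↔ Relation.ReflTransGen G x y) := by
  obtain ⟨q, hq, hqdom⟩ := hce
  refine ⟨⟨?_, ?_, ?_⟩, ?_, ?_⟩
  · intro a; rw [hEdef]; exact Or.inl rfl
  · intro a b h; rw [hEdef] at h ⊢
    rcases h with h | ⟨n, hn, h | h⟩
    · exact Or.inl h.symm
    · exact Or.inr ⟨n, hn, Or.inr ⟨h.2, h.1⟩⟩
    · exact Or.inr ⟨n, hn, Or.inl ⟨h.2, h.1⟩⟩
  · intro a b c h1 h2; rw [hEdef] at h1 h2 ⊢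
    rcases h1 with h1 | ⟨n, hn, h1⟩
    · subst h1; exact h2
    · rcases h2 with h2 | ⟨m, hm, h2⟩
      · subst h2; exact Or.inr ⟨n, hn, h1⟩
      · rcases h1 with ⟨ha, hb⟩ | ⟨ha, hb⟩ <;> rcases h2 with ⟨hb', hc⟩ | ⟨hb', hc⟩ <;>
          exact Or.inl (by omega)
  · -- CE of the paired relation
    classical
    refine ⟨fun n =>
      cond (decide ((Nat.unpair n).1 = (Nat.unpair n).2)) (Part.some ())
        (cond (decide (((Nat.unpair n).2 = (Nat.unpair n).1 + 1 ∧ (Nat.unpair n).1 % 2 = 0) ∨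
            ((Nat.unpair n).1 = (Nat.unpair n).2 + 1 ∧ (Nat.unpair n).2 % 2 = 0)))
          (q (((Nat.unpair n).1 + (Nat.unpair n).2) / 4)) Part.none), ?_, ?_⟩
    · have hu1 : Computable fun n : ℕ => (Nat.unpair n).1 :=
        (Primrec.fst.comp Primrec.unpair).to_comp
      have hu2 : Computable fun n : ℕ => (Nat.unpair n).2 :=
        (Primrec.snd.comp Primrec.unpair).to_comp
      have pu1 : Primrec fun n : ℕ => (Nat.unpair n).1 := Primrec.fst.comp Primrec.unpair
      have pu2 : Primrec fun n : ℕ => (Nat.unpair n).2 := Primrec.snd.comp Primrec.unpair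
      have hc1 : Computable fun n : ℕ => decide ((Nat.unpair n).1 = (Nat.unpair n).2) :=
        (Primrec.eq.comp pu1 pu2).decide.to_comp
      have hc2 : Computable fun n : ℕ =>
          decide (((Nat.unpair n).2 = (Nat.unpair n).1 + 1 ∧ (Nat.unpair n).1 % 2 = 0) ∨
            ((Nat.unpair n).1 = (Nat.unpair n).2 + 1 ∧ (Nat.unpair n).2 % 2 = 0)) := by
        have p1 : PrimrecPred fun n : ℕ =>
            (Nat.unpair n).2 = (Nat.unpair n).1 + 1 ∧ (Nat.unpair n).1 % 2 = 0 :=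
          (Primrec.eq.comp pu2 (Primrec.succ.comp pu1)).and
            (Primrec.eq.comp (Primrec.nat_mod.comp pu1 (Primrec.const 2)) (Primrec.const 0))
        have p2 : PrimrecPred fun n : ℕ =>
            (Nat.unpair n).1 = (Nat.unpair n).2 + 1 ∧ (Nat.unpair n).2 % 2 = 0 :=
          (Primrec.eq.comp pu1 (Primrec.succ.comp pu2)).and
            (Primrec.eq.comp (Primrec.nat_mod.comp pu2 (Primrec.const 2)) (Primrec.const 0))
        exact (p1.or p2).decide.to_comp
      have hk : Computable fun n : ℕ => ((Nat.unpair n).1 + (Nat.unpair n).2) / 4 :=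
        (Primrec.nat_div.comp (Primrec.nat_add.comp pu1 pu2) (Primrec.const 4)).to_comp
      exact Partrec.cond hc1 (Partrec.const' (Part.some ()))
        (Partrec.cond hc2 (hq.comp hk) Partrec.none)
    · intro n
      rcases h : Nat.unpair n with ⟨a, b⟩
      simp only [h, Prod.fst, Prod.snd, Bool.cond_decide]
      rw [hEdef]
      by_cases h1 : a = b
      · simp [h1]
      · rw [if_neg h1]
        by_cases h2 : (b = a + 1 ∧ a % 2 = 0) ∨ (a = b + 1 ∧ b % 2 = 0)
        · rw [if_pos h2, hqdom]
          constructor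
          · intro hA
            exact Or.inr ⟨(a + b) / 4, hA, by omega⟩
          · rintro (hh | ⟨m, hm, hmm⟩)
            · exact absurd hh h1
            · have hq4 : (a + b) / 4 = m := by omega
              rwa [hq4]
        · rw [if_neg h2]
          simp only [Part.not_none_dom, false_iff]
          rintro (hh | ⟨m, hm, hmm⟩)
          · exact h1 hh
          · exact h2 (by omega)
  · -- not computably graphable
    rintro ⟨G, hGcomp, hGsymm, hGirr, hGE⟩
    apply hnc
    have key : ∀ n, A n ↔ G (2 * n) (2 * n + 1) := by
      intro n
      constructor
      · intro hA
        have hE : E (2 * n) (2 * n + 1) := (hEdef _ _).mpr (Or.inr ⟨n, hA, Or.inl ⟨rfl, rfl⟩⟩)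
        have h := (hGE _ _).mp hE
        rcases h.cases_head with h | ⟨c, hc, _⟩
        · omega
        · have hEc : E (2 * n) c := (hGE _ _).mpr (Relation.ReflTransGen.single hc)
          rw [hEdef] at hEc
          have hcne : c ≠ 2 * n := fun h => hGirr _ (h ▸ hc)
          rcases hEc with h | ⟨m, _, hm⟩
          · exact absurd h.symm hcne
          · have : c = 2 * n + 1 := by omega
            rwa [this] at hc
      · intro hG
        have hE : E (2 * n) (2 * n + 1) := (hGE _ _).mpr (Relation.ReflTransGen.single hG)
        rw [hEdef] at hE
        rcases hE with h | ⟨m, hm, hmm⟩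
        · omega
        · have : m = n := by omega
          rwa [this] at hm
    obtain ⟨f, hf, hfe⟩ := ComputablePred.computable_iff.mp hGcomp
    have : A = fun n => (f (Nat.pair (2 * n) (2 * n + 1)) : Prop) := by
      funext n
      rw [show ((f (Nat.pair (2 * n) (2 * n + 1)) : Prop)) =
          (G (Nat.unpair (Nat.pair (2 * n) (2 * n + 1))).1
            (Nat.unpair (Nat.pair (2 * n) (2 * n + 1))).2) from congrFun hfe.symm _,
        Nat.unpair_pair]
      exact propext (key n)
    rw [this]
    apply ComputablePred.computable_iff.mpr
    refine ⟨fun n => f (Nat.pair (2 * n) (2 * n + 1)), ?_, rfl⟩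
    have hpair : Primrec fun n : ℕ => Nat.pair (2 * n) (2 * n + 1) :=
      Primrec₂.natPair.comp (Primrec.nat_mul.comp (Primrec.const 2) Primrec.id)
        (Primrec.succ.comp (Primrec.nat_mul.comp (Primrec.const 2) Primrec.id))
    exact hf.comp hpair.to_comp
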